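/- Let n ≥ 2 and let Q be an n×n complex self-adjoint matrix with Q_{ii} = 0 for all i and |Q_{ij}| = 1 for all i ≠ j. Then Q satisfies Q² = (n−1)·I + μ·Q for some real number μ if and only if Q has exactly two eigenvalues, i.e., the spectrum of Q (as a subset of ℂ) has exactly two elements. -/

import Mathlib

open Matrix Finset

/-- A Seidel (signature) matrix: self-adjoint, zero diagonal, off-diagonal
entries of modulus one.  It has two eigenvalues iff it satisfies a quadratic
equation `Q² = (n-1)I + μQ`. -/
theorem seidel_two_eigenvalues_iff
    (n : ℕ) (hn : 2 ≤ n) (Q : Matrix (Fin n) (Fin n) ℂ)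
    (hherm : Q.IsHermitian)
    (hdiag : ∀ i, Q i i = 0)
    (hoff : ∀ i j, i ≠ j → ‖Q i j‖ = 1) :
    (∃ μ : ℝ, Q ^ 2 = ((n : ℂ) - 1) • (1 : Matrix (Fin n) (Fin n) ℂ) + (μ : ℂ) • Q)
      ↔ (∃ a b : ℂ, a ≠ b ∧ spectrum ℂ Q = {a, b}) := by
  classical
  set d : Fin n → ℝ := hherm.eigenvalues with hd
  set U : Matrix (Fin n) (Fin n) ℂ := (hherm.eigenvectorUnitary : Matrix (Fin n) (Fin n) ℂ)
    with hUdef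
  set D : Matrix (Fin n) (Fin n) ℂ := diagonal (RCLike.ofReal ∘ d) with hDdef
  have hU1 : star U * U = 1 :=
    (Matrix.mem_unitaryGroup_iff').mp (hherm.eigenvectorUnitary).2
  have hU2 : U * star U = 1 :=
    (Matrix.mem_unitaryGroup_iff).mp (hherm.eigenvectorUnitary).2
  have hspec : Q = U * D * star U := hherm.spectral_theorem
  have hconj : ∀ A : Matrix (Fin n) (Fin n) ℂ, star U * (U * A * star U) * U = A := by
    intro A
    calc star U * (U * A * star U) * U = (star U * U) * A * (star U * U) := by
          simp only [mul_assoc]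
      _ = A := by rw [hU1]; simp
  have key : ∀ e f : ℂ,
      (Q ^ 2 = e • (1 : Matrix (Fin n) (Fin n) ℂ) + f • Q
        ↔ ∀ k, ((d k : ℂ)) ^ 2 = e + f * d k) := by
    intro e f
    have h1 : Q ^ 2 = U * (D * D) * star U := by
      rw [sq, hspec]
      simp only [mul_assoc]
      rw [← mul_assoc (star U) U, hU1, one_mul]
    have h2 : e • (1 : Matrix (Fin n) (Fin n) ℂ) + f • Q
        = U * (e • (1 : Matrix (Fin n) (Fin n) ℂ) + f • D) * star U := by
      rw [Matrix.mul_add, Matrix.add_mul, Matrix.mul_smul, Matrix.mul_smul,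
        Matrix.smul_mul, Matrix.smul_mul, mul_one, hU2, ← hspec]
    have h3 : D * D = diagonal (fun k => (d k : ℂ) ^ 2) := by
      rw [hDdef, diagonal_mul_diagonal]
      exact congrArg diagonal (funext fun k => by simp [sq])
    have h4 : e • (1 : Matrix (Fin n) (Fin n) ℂ) + f • D
        = diagonal (fun k => e + f * d k) := by
      ext i j
      rcases eq_or_ne i j with rfl | hij
      · simp [hDdef, Matrix.one_apply]
      · simp [hDdef, Matrix.one_apply_ne hij, diagonal_apply_ne _ hij]
    constructor
    · intro h
      rw [h1, h2] at h
      have h' := congrArg (fun M => star U * M * U) h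
      simp only [hconj] at h'
      rw [h3, h4] at h'
      have := diagonal_eq_diagonal_iff.mp h'
      intro k; exact this k
    · intro h
      rw [h1, h2, h3, h4]
      exact congrArg (fun v => U * diagonal v * star U) (funext h)
  have hsp : spectrum ℂ Q = Set.range (fun k => ((d k : ℝ) : ℂ)) := by
    conv_lhs => rw [hherm.spectral_theorem, Unitary.conjStarAlgAut_apply, Unitary.spectrum_star_right_conjugate,
      spectrum_diagonal]
    rfl
  have hi0 : (0 : ℕ) < n := by omega
  have hi1 : (1 : ℕ) < n := by omega
  have hne01 : (⟨0, hi0⟩ : Fin n) ≠ ⟨1, hi1⟩ := by simp [Fin.ext_iff]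
  constructor
  · rintro ⟨μ, hμ⟩
    have hq : ∀ k, (d k) ^ 2 = ((n : ℝ) - 1) + μ * d k := by
      intro k
      have := (key _ _).mp hμ k
      have h2 : (((d k) ^ 2 : ℝ) : ℂ) = ((((n : ℝ) - 1) + μ * d k : ℝ) : ℂ) := by
        push_cast
        convert this using 2
      exact_mod_cast h2
    have hexists : ∃ i j : Fin n, d i ≠ d j := by
      by_contra hcon
      push_neg at hcon
      have hDc : D = ((d ⟨0, hi0⟩ : ℝ) : ℂ) • (1 : Matrix (Fin n) (Fin n) ℂ) := by
        ext i j
        rcases eq_or_ne i j with rfl | hij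
        · simp [hDdef, hcon i ⟨0, hi0⟩, Matrix.one_apply]
        · simp [hDdef, diagonal_apply_ne _ hij, Matrix.one_apply_ne hij]
      have hQc : Q = ((d ⟨0, hi0⟩ : ℝ) : ℂ) • (1 : Matrix (Fin n) (Fin n) ℂ) := by
        rw [hspec, hDc, Matrix.mul_smul, Matrix.smul_mul, mul_one, hU2]
      have h01 := hoff ⟨0, hi0⟩ ⟨1, hi1⟩ hne01
      rw [hQc] at h01
      simp [Matrix.one_apply_ne hne01] at h01
    obtain ⟨i, j, hij⟩ := hexists
    refine ⟨(d i : ℂ), (d j : ℂ), by exact_mod_cast hij, ?_⟩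
    have hsum : d i + d j = μ := by
      have hne : d i - d j ≠ 0 := sub_ne_zero.mpr hij
      apply mul_left_cancel₀ hne
      linear_combination hq i - hq j
    have hprod : d i * d j = -((n : ℝ) - 1) := by
      linear_combination (-1) * hq i + d i * hsum
    rw [hsp]
    ext x
    constructor
    · rintro ⟨k, rfl⟩
      have hroot : (d k - d i) * (d k - d j) = 0 := by
        linear_combination hq k - d k * hsum + hprod
      rcases mul_eq_zero.mp hroot with h | h
      · exact Or.inl (Complex.ofReal_inj.mpr (sub_eq_zero.mp h))
      · exact Or.inr (Complex.ofReal_inj.mpr (sub_eq_zero.mp h))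
    · rintro (rfl | h)
      · exact ⟨i, rfl⟩
      · simp only [Set.mem_singleton_iff] at h
        exact ⟨j, h.symm⟩
  · rintro ⟨a, b, hab, hs⟩
    rw [hsp] at hs
    have ha : a ∈ Set.range (fun k => ((d k : ℝ) : ℂ)) := by
      rw [hs]; exact Set.mem_insert _ _
    have hb : b ∈ Set.range (fun k => ((d k : ℝ) : ℂ)) := by
      rw [hs]; exact Set.mem_insert_of_mem _ rfl
    obtain ⟨ia, hia⟩ := ha
    obtain ⟨ib, hib⟩ := hb
    have hia' : ((d ia : ℝ) : ℂ) = a := hia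
    have hib' : ((d ib : ℝ) : ℂ) = b := hib
    have hmem : ∀ k, ((d k : ℝ) : ℂ) = a ∨ ((d k : ℝ) : ℂ) = b := by
      intro k
      have : ((d k : ℝ) : ℂ) ∈ ({a, b} : Set ℂ) := by
        rw [← hs]; exact ⟨k, rfl⟩
      simpa using this
    have hQ2 : Q ^ 2 = (-(a * b)) • (1 : Matrix (Fin n) (Fin n) ℂ) + (a + b) • Q := by
      refine (key _ _).mpr ?_
      intro k
      rcases hmem k with h | h <;> rw [h] <;> ring
    -- trace computation
    have htr1 : ∀ i : Fin n, ∑ j, Q i j * Q j i = (n : ℂ) - 1 := by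
      intro i
      have hterm : ∀ j, Q i j * Q j i = if j = i then 0 else 1 := by
        intro j
        rcases eq_or_ne j i with rfl | hji
        · simp [hdiag]
        · have h1 : Q j i = (starRingEnd ℂ) (Q i j) := (hherm.apply j i).symm
          rw [h1, Complex.mul_conj]
          have : Complex.normSq (Q i j) = 1 := by
            rw [← Complex.sq_norm, hoff i j (Ne.symm hji)]
            norm_num
          simp [this, hji]
      calc ∑ j, Q i j * Q j i = ∑ j : Fin n, (if j = i then (0 : ℂ) else 1) :=
            Finset.sum_congr rfl (fun j _ => hterm j)
        _ = ∑ j : Fin n, ((1 : ℂ) - if j = i then 1 else 0) := by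
            apply Finset.sum_congr rfl
            intro j _
            split_ifs <;> ring
        _ = (n : ℂ) - 1 := by
            rw [Finset.sum_sub_distrib, Finset.sum_const, Finset.sum_ite_eq']
            simp [mul_comm]
    have htrQ2 : ∑ i, (Q ^ 2) i i = (n : ℂ) * ((n : ℂ) - 1) := by
      have : ∀ i : Fin n, (Q ^ 2) i i = ∑ j, Q i j * Q j i := by
        intro i; rw [sq, Matrix.mul_apply]
      rw [Finset.sum_congr rfl (fun i _ => this i),
        Finset.sum_congr rfl (fun i _ => htr1 i), Finset.sum_const]
      simp [mul_comm]
    have htrR : ∑ i, ((-(a * b)) • (1 : Matrix (Fin n) (Fin n) ℂ) + (a + b) • Q) i i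
        = -(a * b) * n := by
      have : ∀ i : Fin n, ((-(a * b)) • (1 : Matrix (Fin n) (Fin n) ℂ) + (a + b) • Q) i i
          = -(a * b) := by
        intro i
        simp [Matrix.add_apply, Matrix.smul_apply, Matrix.one_apply, hdiag]
      rw [Finset.sum_congr rfl (fun i _ => this i), Finset.sum_const]
      simp [mul_comm]
    have heq : -(a * b) * n = (n : ℂ) * ((n : ℂ) - 1) := by
      rw [← htrR, ← htrQ2, hQ2]
    have hn0 : (n : ℂ) ≠ 0 := by
      exact_mod_cast Nat.cast_ne_zero.mpr (by omega)
    have hab2 : -(a * b) = (n : ℂ) - 1 := by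
      apply mul_right_cancel₀ hn0
      rw [heq]; ring
    refine ⟨d ia + d ib, ?_⟩
    rw [hQ2, hab2]
    congr 1
    congr 1
    push_cast
    rw [hia', hib']
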